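/- (Sphere-packing reduction to hypothesis testing / meta-converse) For any classical-quantum channel W : X → S(H) and any code C_n of blocklength n with M messages, the maximal error probability satisfies ε_max(C_n) ≥ max_{σ∈S(H)} min_{x^n ∈ C_n} α̂_{1/M}(W_{x^n}^{⊗n} ‖ σ^{⊗n}), where α̂_μ(ρ‖σ) := min{ Tr[(1-Q)ρ] : 0 ≤ Q ≤ 1, Tr[Qσ] ≤ μ }. -/

import Mathlib

open Matrix
open scoped BigOperators ComplexOrder

noncomputable section

variable {n : Type*} [Fintype n] [DecidableEq n]

/-- Density matrices: positive semidefinite with unit trace. -/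
def IsDensity (A : Matrix n n ℂ) : Prop := A.PosSemidef ∧ A.trace = 1

/-- Minimum type-I error of a quantum hypothesis test between `ρ` and `σ` under a
type-II error constraint `μ`: `α̂_μ(ρ‖σ) = min { Tr[(1-Q)ρ] : 0 ≤ Q ≤ 1, Tr[Qσ] ≤ μ }`. -/
def hatAlpha (μ : ℝ) (ρ σ : Matrix n n ℂ) : ℝ :=
  sInf { e | ∃ Q : Matrix n n ℂ, Q.PosSemidef ∧ (1 - Q).PosSemidef ∧
      ((Q * σ).trace).re ≤ μ ∧ e = (((1 - Q) * ρ).trace).re }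

/-- The `m`-fold product state `W_{x_1} ⊗ ⋯ ⊗ W_{x_m}` on `(ℂ^d)^{⊗m}`. -/
def prodState {d m : ℕ} {X : Type*} (W : X → Matrix (Fin d) (Fin d) ℂ) (xs : Fin m → X) :
    Matrix (Fin m → Fin d) (Fin m → Fin d) ℂ :=
  Matrix.of fun i j => ∏ k, W (xs k) (i k) (j k)

/-- The `m`-fold tensor power `σ^{⊗m}`. -/
def nFold {d : ℕ} (m : ℕ) (σ : Matrix (Fin d) (Fin d) ℂ) :
    Matrix (Fin m → Fin d) (Fin m → Fin d) ℂ :=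
  Matrix.of fun i j => ∏ k, σ (i k) (j k)

/-! ### Auxiliary lemmas -/

open scoped MatrixOrder in
lemma posSemidef_iff_eq_transpose_mul_self {n : Type*} [Fintype n] [DecidableEq n]
    {A : Matrix n n ℂ} : A.PosSemidef ↔ ∃ B : Matrix n n ℂ, A = Bᴴ * B := by
  constructor
  · intro hA
    obtain ⟨B, hB⟩ := CStarAlgebra.nonneg_iff_eq_star_mul_self.mp hA.nonneg
    exact ⟨B, hB⟩
  · rintro ⟨B, rfl⟩
    exact posSemidef_conjTranspose_mul_self B

lemma tensor_posSemidef {d m : ℕ} (A : Fin m → Matrix (Fin d) (Fin d) ℂ)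
    (hA : ∀ k, (A k).PosSemidef) :
    (Matrix.of fun i j : Fin m → Fin d => ∏ k, A k (i k) (j k)).PosSemidef := by
  choose B hB using fun k => (posSemidef_iff_eq_transpose_mul_self.mp (hA k))
  have : (Matrix.of fun i j : Fin m → Fin d => ∏ k, A k (i k) (j k)) =
      (Matrix.of fun i j : Fin m → Fin d => ∏ k, B k (i k) (j k))ᴴ *
      (Matrix.of fun i j : Fin m → Fin d => ∏ k, B k (i k) (j k)) := by
    ext i j
    simp only [mul_apply, conjTranspose_apply, of_apply, star_prod]
    have : ∀ k, A k (i k) (j k) = ∑ a, star (B k a (i k)) * B k a (j k) := by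
      intro k
      rw [hB k]
      simp [mul_apply, conjTranspose_apply]
    simp_rw [this]
    rw [Finset.prod_univ_sum]
    rw [Fintype.piFinset_univ]
    simp [Finset.prod_mul_distrib]
  rw [this]
  exact posSemidef_conjTranspose_mul_self _

lemma tensor_trace {d m : ℕ} (A : Fin m → Matrix (Fin d) (Fin d) ℂ) :
    (Matrix.of fun i j : Fin m → Fin d => ∏ k, A k (i k) (j k)).trace = ∏ k, (A k).trace := by
  simp only [Matrix.trace, Matrix.diag, of_apply]
  rw [Finset.prod_univ_sum, Fintype.piFinset_univ]

lemma psd_trace_nonneg' {n : Type*} [Fintype n] [DecidableEq n] {A : Matrix n n ℂ}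
    (hA : A.PosSemidef) : 0 ≤ A.trace := by
  rw [Matrix.trace]
  apply Finset.sum_nonneg
  intro i _
  exact hA.diag_nonneg

lemma trace_mul_psd_nonneg {n : Type*} [Fintype n] [DecidableEq n]
    {A B : Matrix n n ℂ} (hA : A.PosSemidef) (hB : B.PosSemidef) :
    0 ≤ ((A * B).trace).re := by
  obtain ⟨C, rfl⟩ := posSemidef_iff_eq_transpose_mul_self.mp hB
  have h1 : (A * (Cᴴ * C)).trace = (C * A * Cᴴ).trace := by
    rw [← Matrix.mul_assoc, Matrix.trace_mul_comm, Matrix.mul_assoc]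
  rw [h1]
  have := psd_trace_nonneg' (hA.mul_mul_conjTranspose_same C)
  exact (Complex.nonneg_iff.mp this).1

/-- Meta-converse / sphere-packing reduction to binary hypothesis testing: the maximal
error probability of any code is lower bounded by
`max_σ min_{codewords} α̂_{1/M}(W_{x^n}^{⊗n} ‖ σ^{⊗n})`. -/
theorem meta_converse {d nb M : ℕ} {X : Type*} [Fintype X] (hM : 0 < M)
    (W : X → Matrix (Fin d) (Fin d) ℂ) (hW : ∀ x, IsDensity (W x))
    (c : Fin M → (Fin nb → X))
    (Pov : Fin M → Matrix (Fin nb → Fin d) (Fin nb → Fin d) ℂ)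
    (hPovPos : ∀ m, (Pov m).PosSemidef) (hPovSum : ∑ m, Pov m = 1) :
    (⨆ σ : {σ : Matrix (Fin d) (Fin d) ℂ // IsDensity σ},
        ⨅ m : Fin M, hatAlpha (1 / (M : ℝ)) (prodState W (c m)) (nFold nb σ.1)) ≤
      ⨆ m : Fin M, (1 - ((Pov m * prodState W (c m)).trace).re) := by
  have hρpsd : ∀ m, (prodState W (c m)).PosSemidef := fun m =>
    tensor_posSemidef _ (fun k => (hW _).1)
  have hρtr : ∀ m, (prodState W (c m)).trace = 1 := by
    intro m
    rw [prodState, tensor_trace]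
    simp [(hW _).2]
  have hPov1 : ∀ m, (1 - Pov m).PosSemidef := by
    intro m
    have h : 1 - Pov m = ∑ m' ∈ Finset.univ.erase m, Pov m' := by
      rw [Finset.sum_erase_eq_sub (Finset.mem_univ m), hPovSum]
    rw [h]
    exact Finset.sum_induction _ _ (fun a b ha hb => ha.add hb) Matrix.PosSemidef.zero
      (fun i _ => hPovPos i)
  have hsub : ∀ m, (((1 - Pov m) * prodState W (c m)).trace).re
      = 1 - ((Pov m * prodState W (c m)).trace).re := by
    intro m
    rw [Matrix.sub_mul, Matrix.one_mul, Matrix.trace_sub, hρtr m]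
    simp
  have hG : ∀ m, 0 ≤ 1 - ((Pov m * prodState W (c m)).trace).re := by
    intro m
    rw [← hsub m]
    exact trace_mul_psd_nonneg (hPov1 m) (hρpsd m)
  have hGbdd : BddAbove (Set.range fun m : Fin M =>
      1 - ((Pov m * prodState W (c m)).trace).re) :=
    Set.Finite.bddAbove (Set.finite_range _)
  rcases isEmpty_or_nonempty {σ : Matrix (Fin d) (Fin d) ℂ // IsDensity σ} with hE | hNE
  · have h0 : (⨆ σ : {σ : Matrix (Fin d) (Fin d) ℂ // IsDensity σ},
        ⨅ m : Fin M, hatAlpha (1 / (M : ℝ)) (prodState W (c m)) (nFold nb σ.1)) = 0 := by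
      rw [iSup, Set.range_eq_empty, Real.sSup_empty]
    rw [h0]
    exact le_trans (hG ⟨0, hM⟩) (le_ciSup hGbdd ⟨0, hM⟩)
  · apply ciSup_le
    intro σ
    have hσpsd : (nFold nb σ.1).PosSemidef :=
      tensor_posSemidef (fun _ : Fin nb => σ.1) (fun _ => σ.2.1)
    have hσtr : (nFold nb σ.1).trace = 1 := by
      rw [nFold, tensor_trace]
      simp [σ.2.2]
    have hsum : ∑ m, ((Pov m * nFold nb σ.1).trace).re = 1 := by
      have h : ∑ m, (Pov m * nFold nb σ.1).trace = 1 := by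
        rw [← Matrix.trace_sum, ← Finset.sum_mul, hPovSum, Matrix.one_mul, hσtr]
      rw [← Complex.re_sum, h]
      simp
    have hex : ∃ m0 : Fin M, ((Pov m0 * nFold nb σ.1).trace).re ≤ 1 / (M : ℝ) := by
      by_contra h
      push_neg at h
      haveI : Nonempty (Fin M) := Fin.pos_iff_nonempty.mp hM
      have hlt : ∑ m : Fin M, (1 / (M : ℝ)) < ∑ m, ((Pov m * nFold nb σ.1).trace).re :=
        Finset.sum_lt_sum_of_nonempty Finset.univ_nonempty (fun i _ => h i)
      have hM' : (M : ℝ) ≠ 0 := Nat.cast_ne_zero.mpr hM.ne'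
      rw [Finset.sum_const, Finset.card_univ, Fintype.card_fin, nsmul_eq_mul,
        mul_one_div, div_self hM', hsum] at hlt
      exact lt_irrefl _ hlt
    obtain ⟨m0, hm0⟩ := hex
    have h1 : (⨅ m, hatAlpha (1 / (M : ℝ)) (prodState W (c m)) (nFold nb σ.1)) ≤
        hatAlpha (1 / (M : ℝ)) (prodState W (c m0)) (nFold nb σ.1) :=
      ciInf_le (Set.Finite.bddBelow (Set.finite_range _)) m0
    have h2 : hatAlpha (1 / (M : ℝ)) (prodState W (c m0)) (nFold nb σ.1) ≤
        1 - ((Pov m0 * prodState W (c m0)).trace).re := by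
      apply csInf_le
      · refine ⟨0, ?_⟩
        rintro e ⟨Q, hQ, hQ1, -, rfl⟩
        exact trace_mul_psd_nonneg hQ1 (hρpsd m0)
      · exact ⟨Pov m0, hPovPos m0, hPov1 m0, hm0, (hsub m0).symm⟩
    exact le_trans (h1.trans h2) (le_ciSup hGbdd m0)

end
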